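/- Let $A$ be a finitely generated abelian group, $B$ a group acting on a set $X$, and $M = \bigoplus_{x\in X} A$ the corresponding $\mathbb{Z}B$-module. Write $A = \bigoplus_{p} A_p$ where $A_p$ is the $p$-primary part for primes $p$ and $A_0 = A/\mathrm{tor}(A)$. Then $\mathrm{End}_{\mathbb{Z}B}(M)$ is directly finite if and only if $\mathrm{End}_{\mathbb{Z}B}(A_p X)$ is directly finite for every $p \geq 0$ with $A_p \neq 0$ (where $A_p X = \bigoplus_{x \in X} A_p$). -/

import Mathlib

open Finsupp SemidirectProduct

/-- The permutation action of `b : B` on the free `A`-module `X →₀ A` on a `B`-set `X`. -/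
def permAct {B : Type*} [Group B] {X : Type*} [MulAction B X] {A : Type*} [AddCommGroup A]
    (b : B) : (X →₀ A) ≃+ (X →₀ A) :=
  Finsupp.domCongr (MulAction.toPerm b)

lemma permAct_apply {B : Type*} [Group B] {X : Type*} [MulAction B X] {A : Type*}
    [AddCommGroup A] (b : B) (f : X →₀ A) (x : X) : permAct b f x = f (b⁻¹ • x) := by
  simp [permAct, Finsupp.domCongr, Finsupp.equivMapDomain, MulAction.toPerm]

/-- Direct finiteness of the endomorphism ring `End_{ℤB}(⨁_{x ∈ X} A)` of the permutation
`ℤB`-module `X →₀ A`, stated elementwise: the `ℤB`-endomorphisms are exactly the additive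
endomorphisms commuting with the permutation action of `B`. -/
def EndDF (B : Type*) [Group B] (X : Type*) [MulAction B X] (A : Type*) [AddCommGroup A] :
    Prop :=
  ∀ α β : (X →₀ A) →+ (X →₀ A),
    (∀ (b : B) (f : X →₀ A), α (permAct b f) = permAct b (α f)) →
    (∀ (b : B) (f : X →₀ A), β (permAct b f) = permAct b (β f)) →
    α.comp β = AddMonoidHom.id (X →₀ A) → β.comp α = AddMonoidHom.id (X →₀ A)

section Aux
variable {B : Type*} [Group B] {X : Type*} [MulAction B X]

lemma permAct_mapRange {A C : Type*} [AddCommGroup A] [AddCommGroup C] (φ : A →+ C) (b : B)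
    (f : X →₀ A) :
    permAct b (Finsupp.mapRange.addMonoidHom φ f) =
      Finsupp.mapRange.addMonoidHom φ (permAct b f) := by
  ext x
  simp [permAct_apply, Finsupp.mapRange.addMonoidHom, Finsupp.mapRange_apply]

lemma EndDF.transfer {A C : Type*} [AddCommGroup A] [AddCommGroup C]
    (i : C →+ A) (r : A →+ C) (hri : ∀ c, r (i c) = c)
    (h : EndDF B X A) : EndDF B X C := by
  intro α β hα hβ hαβ
  set I : (X →₀ C) →+ (X →₀ A) := Finsupp.mapRange.addMonoidHom i with hI
  set R : (X →₀ A) →+ (X →₀ C) := Finsupp.mapRange.addMonoidHom r with hR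
  have hRI : ∀ g : X →₀ C, R (I g) = g := by
    intro g; ext x
    simp [hI, hR, Finsupp.mapRange.addMonoidHom, Finsupp.mapRange_apply, hri]
  have hInj : Function.Injective I := by
    intro g g' hgg'
    rw [← hRI g, ← hRI g', hgg']
  set α' : (X →₀ A) →+ (X →₀ A) := I.comp (α.comp R) + (AddMonoidHom.id _ - I.comp R) with hα'
  set β' : (X →₀ A) →+ (X →₀ A) := I.comp (β.comp R) + (AddMonoidHom.id _ - I.comp R) with hβ'
  have hα'app : ∀ f, α' f = I (α (R f)) + (f - I (R f)) := by
    intro f; simp [hα']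
  have hβ'app : ∀ f, β' f = I (β (R f)) + (f - I (R f)) := by
    intro f; simp [hβ']
  have hcommI : ∀ (b : B) (g : X →₀ C), I (permAct b g) = permAct b (I g) := by
    intro b g; rw [hI, permAct_mapRange]
  have hcommR : ∀ (b : B) (f : X →₀ A), R (permAct b f) = permAct b (R f) := by
    intro b f; rw [hR, permAct_mapRange]
  have hα'comm : ∀ (b : B) (f : X →₀ A), α' (permAct b f) = permAct b (α' f) := by
    intro b f
    simp only [hα'app, hcommR, hα, hcommI, map_add, map_sub]
  have hβ'comm : ∀ (b : B) (f : X →₀ A), β' (permAct b f) = permAct b (β' f) := by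
    intro b f
    simp only [hβ'app, hcommR, hβ, hcommI, map_add, map_sub]
  have hαβ' : ∀ g, α (β g) = g := fun g => DFunLike.congr_fun hαβ g
  have hα'β' : α'.comp β' = AddMonoidHom.id (X →₀ A) := by
    apply AddMonoidHom.ext; intro f
    have h1 : R (β' f) = β (R f) := by
      rw [hβ'app, map_add, map_sub, hRI, hRI]
      abel
    simp only [AddMonoidHom.comp_apply, AddMonoidHom.id_apply]
    rw [hα'app, h1, hαβ', hβ'app]
    abel
  have hfin := h α' β' hα'comm hβ'comm hα'β'
  have hfin' : ∀ f, β' (α' f) = f := fun f => DFunLike.congr_fun hfin f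
  apply AddMonoidHom.ext; intro g
  simp only [AddMonoidHom.comp_apply, AddMonoidHom.id_apply]
  apply hInj
  have e1 : α' (I g) = I (α g) := by
    rw [hα'app, hRI]
    abel
  have e2 : β' (I (α g)) = I (β (α g)) := by
    rw [hβ'app, hRI]
    abel
  rw [← e2, ← e1, hfin']

variable {A : Type*} [AddCommGroup A]

/-- Corestriction of a finsupp with values in a subgroup. -/
def corestrict (S : AddSubgroup A) (f : X →₀ A) (h : ∀ x, f x ∈ S) : X →₀ S where
  support := f.support
  toFun := fun x => ⟨f x, h x⟩
  mem_support_toFun := fun x => by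
    simp [Finsupp.mem_support_iff, Subtype.ext_iff]

lemma incl_corestrict (S : AddSubgroup A) (f : X →₀ A) (h : ∀ x, f x ∈ S) :
    Finsupp.mapRange.addMonoidHom S.subtype (corestrict S f h) = f := by
  ext x
  simp [Finsupp.mapRange_apply, corestrict]

lemma incl_apply_mem (S : AddSubgroup A) (g : X →₀ S) (x : X) :
    (Finsupp.mapRange.addMonoidHom S.subtype g) x ∈ S := by
  simp [Finsupp.mapRange_apply]

lemma incl_injective (S : AddSubgroup A) :
    Function.Injective ⇑(Finsupp.mapRange.addMonoidHom (ι := X) S.subtype) := by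
  intro g g' e
  ext x
  have h := DFunLike.congr_fun e x
  simp only [Finsupp.mapRange.addMonoidHom, AddMonoidHom.coe_mk, ZeroHom.coe_mk,
    Finsupp.mapRange_apply] at h
  exact h

/-- A subgroup is "saturated" if every additive endomorphism of `X →₀ A` maps
`S`-valued finsupps to `S`-valued finsupps. -/
def Saturated (S : AddSubgroup A) : Prop :=
  ∀ (α : (X →₀ A) →+ (X →₀ A)) (f : X →₀ A), (∀ x, f x ∈ S) → ∀ x, α f x ∈ S

noncomputable def restrictHom {S : AddSubgroup A} (hS : Saturated (X := X) S)
    (α : (X →₀ A) →+ (X →₀ A)) : (X →₀ S) →+ (X →₀ S) :=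
  AddMonoidHom.mk' (fun g => corestrict S (α (Finsupp.mapRange.addMonoidHom S.subtype g))
      (hS α _ (incl_apply_mem S g)))
    (by
      intro g g'
      apply incl_injective S
      rw [map_add _ (corestrict S _ _), incl_corestrict, incl_corestrict, incl_corestrict, map_add, map_add])

lemma incl_restrictHom {S : AddSubgroup A} (hS : Saturated (X := X) S)
    (α : (X →₀ A) →+ (X →₀ A)) (g : X →₀ S) :
    Finsupp.mapRange.addMonoidHom S.subtype (restrictHom hS α g) =
      α (Finsupp.mapRange.addMonoidHom S.subtype g) := by
  exact incl_corestrict S (α (Finsupp.mapRange.addMonoidHom S.subtype g))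
    (hS α _ (incl_apply_mem S g))

lemma restrictHom_comm {S : AddSubgroup A} (hS : Saturated (X := X) S)
    (α : (X →₀ A) →+ (X →₀ A)) (hα : ∀ (b : B) (f : X →₀ A), α (permAct b f) = permAct b (α f))
    (b : B) (g : X →₀ S) : restrictHom hS α (permAct b g) = permAct b (restrictHom hS α g) := by
  apply incl_injective S
  rw [incl_restrictHom, ← permAct_mapRange, hα, ← permAct_mapRange, incl_restrictHom]

lemma restrictHom_comp {S : AddSubgroup A} (hS : Saturated (X := X) S)
    (α β : (X →₀ A) →+ (X →₀ A)) (hαβ : α.comp β = AddMonoidHom.id (X →₀ A)) :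
    (restrictHom hS α).comp (restrictHom hS β) = AddMonoidHom.id (X →₀ S) := by
  apply AddMonoidHom.ext; intro g
  apply incl_injective S
  simp only [AddMonoidHom.comp_apply, AddMonoidHom.id_apply]
  rw [incl_restrictHom, incl_restrictHom]
  exact DFunLike.congr_fun hαβ _

lemma fix_of_restrict_fix {S : AddSubgroup A} (hS : Saturated (X := X) S)
    (γ : (X →₀ A) →+ (X →₀ A)) (hγ : restrictHom hS γ = AddMonoidHom.id (X →₀ S))
    (f : X →₀ A) (hf : ∀ x, f x ∈ S) : γ f = f := by
  have h1 := incl_restrictHom hS γ (corestrict S f hf)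
  rw [hγ, AddMonoidHom.id_apply, incl_corestrict] at h1
  exact h1.symm

lemma mem_primary_iff (p : ℕ) [hp : Fact p.Prime] (a : A) :
    a ∈ AddCommGroup.primaryComponent A p ↔ ∃ k : ℕ, p ^ k • a = 0 := by
  exact AddCommGroup.mem_primaryComponent

lemma saturated_primary (p : ℕ) [hp : Fact p.Prime] :
    Saturated (X := X) (AddCommGroup.primaryComponent A p) := by
  classical
  intro α f hf x
  choose k hk using fun y => (mem_primary_iff p (f y)).mp (hf y)
  set K := ∑ y ∈ f.support, k y with hK
  have hKf : p ^ K • f = 0 := by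
    ext y
    rw [Finsupp.smul_apply, Finsupp.coe_zero, Pi.zero_apply]
    by_cases hy : y ∈ f.support
    · have hle : k y ≤ K := Finset.single_le_sum (fun _ _ => Nat.zero_le _) hy
      calc p ^ K • f y = (p ^ k y * p ^ (K - k y)) • f y := by
            rw [← pow_add, Nat.add_sub_cancel' hle]
        _ = p ^ (K - k y) • (p ^ k y • f y) := mul_nsmul _ _ _
        _ = 0 := by rw [hk y, smul_zero]
    · rw [Finsupp.notMem_support_iff.mp hy, smul_zero]
  rw [mem_primary_iff]
  refine ⟨K, ?_⟩
  have h0 : p ^ K • α f = 0 := by rw [← map_nsmul, hKf, map_zero]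
  calc p ^ K • α f x = (p ^ K • α f) x := (Finsupp.smul_apply _ _ _).symm
    _ = 0 := by rw [h0]; rfl

lemma mem_torsion_iff' (a : A) :
    a ∈ AddCommGroup.torsion A ↔ ∃ n : ℕ, 0 < n ∧ n • a = 0 :=
  isOfFinAddOrder_iff_nsmul_eq_zero

lemma saturated_torsion : Saturated (X := X) (AddCommGroup.torsion A) := by
  classical
  intro α f hf x
  choose n hn hn0 using fun y => (mem_torsion_iff' (f y)).mp (hf y)
  set N := ∏ y ∈ f.support, n y with hN
  have hNpos : 0 < N := Finset.prod_pos (fun y _ => hn y)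
  have hNf : N • f = 0 := by
    ext y
    rw [Finsupp.smul_apply, Finsupp.coe_zero, Pi.zero_apply]
    by_cases hy : y ∈ f.support
    · obtain ⟨c, hc⟩ := Finset.dvd_prod_of_mem n hy
      calc N • f y = (n y * c) • f y := by rw [← hc]
        _ = c • (n y • f y) := mul_nsmul _ _ _
        _ = 0 := by rw [hn0 y, smul_zero]
    · rw [Finsupp.notMem_support_iff.mp hy, smul_zero]
  rw [mem_torsion_iff']
  refine ⟨N, hNpos, ?_⟩
  have h0 : N • α f = 0 := by rw [← map_nsmul, hNf, map_zero]
  calc N • α f x = (N • α f) x := (Finsupp.smul_apply _ _ _).symm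
    _ = 0 := by rw [h0]; rfl

noncomputable def qmap : (X →₀ A) →+ (X →₀ A ⧸ AddCommGroup.torsion A) :=
  Finsupp.mapRange.addMonoidHom (QuotientAddGroup.mk' (AddCommGroup.torsion A))

lemma qmap_eq_zero_iff (f : X →₀ A) :
    qmap (X := X) f = 0 ↔ ∀ x, f x ∈ AddCommGroup.torsion A := by
  rw [Finsupp.ext_iff]
  apply forall_congr'
  intro x
  simp [qmap, Finsupp.mapRange_apply,
    QuotientAddGroup.eq_zero_iff]

lemma qmap_surjective :
    Function.Surjective (qmap (X := X) (A := A)) := by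
  intro g
  induction g using Finsupp.induction with
  | zero => exact ⟨0, map_zero _⟩
  | single_add x q g hxg hq ih =>
    obtain ⟨f, hf⟩ := ih
    obtain ⟨a, ha⟩ := QuotientAddGroup.mk'_surjective (AddCommGroup.torsion A) q
    refine ⟨Finsupp.single x a + f, ?_⟩
    rw [map_add, hf]
    congr 1
    simp only [qmap, Finsupp.mapRange.addMonoidHom, AddMonoidHom.coe_mk, ZeroHom.coe_mk,
      Finsupp.mapRange_single]
    exact congrArg _ ha

lemma qmap_congr (α : (X →₀ A) →+ (X →₀ A)) (f f' : X →₀ A)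
    (h : qmap (X := X) f = qmap f') : qmap (X := X) (α f) = qmap (α f') := by
  have hd : qmap (X := X) (f - f') = 0 := by rw [map_sub, h, sub_self]
  have hs := saturated_torsion α (f - f') ((qmap_eq_zero_iff _).mp hd)
  have hd2 : qmap (X := X) (α (f - f')) = 0 := (qmap_eq_zero_iff _).mpr hs
  rw [map_sub, map_sub, sub_eq_zero] at hd2
  exact hd2

noncomputable def quotLift (α : (X →₀ A) →+ (X →₀ A)) :
    (X →₀ A ⧸ AddCommGroup.torsion A) →+ (X →₀ A ⧸ AddCommGroup.torsion A) :=
  AddMonoidHom.mk' (fun g => qmap (α (Classical.choose (qmap_surjective g))))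
    (by
      intro g g'
      have h1 := Classical.choose_spec (qmap_surjective (X := X) (A := A) (g + g'))
      have h2 := Classical.choose_spec (qmap_surjective (X := X) (A := A) g)
      have h3 := Classical.choose_spec (qmap_surjective (X := X) (A := A) g')
      have : qmap (X := X) (Classical.choose (qmap_surjective (g + g'))) =
          qmap (Classical.choose (qmap_surjective g) + Classical.choose (qmap_surjective g')) := by
        rw [map_add, h1, h2, h3]
      show qmap (α (Classical.choose (qmap_surjective (g + g')))) =
        qmap (α (Classical.choose (qmap_surjective g))) +
          qmap (α (Classical.choose (qmap_surjective g')))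
      rw [qmap_congr α _ _ this, map_add, map_add])

lemma quotLift_qmap (α : (X →₀ A) →+ (X →₀ A)) (f : X →₀ A) :
    quotLift α (qmap (X := X) f) = qmap (α f) := by
  have h1 := Classical.choose_spec (qmap_surjective (X := X) (A := A) (qmap f))
  exact qmap_congr α _ _ h1

lemma qmap_permAct (b : B) (f : X →₀ A) :
    qmap (X := X) (permAct b f) = permAct b (qmap f) := by
  rw [qmap, ← permAct_mapRange]

lemma quotLift_comm (α : (X →₀ A) →+ (X →₀ A))
    (hα : ∀ (b : B) (f : X →₀ A), α (permAct b f) = permAct b (α f)) (b : B)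
    (g : X →₀ A ⧸ AddCommGroup.torsion A) :
    quotLift α (permAct b g) = permAct b (quotLift α g) := by
  obtain ⟨f, rfl⟩ := qmap_surjective g
  rw [← qmap_permAct, quotLift_qmap, quotLift_qmap, hα, qmap_permAct]

lemma quotLift_comp (α β : (X →₀ A) →+ (X →₀ A))
    (hαβ : α.comp β = AddMonoidHom.id (X →₀ A)) :
    (quotLift α).comp (quotLift β) = AddMonoidHom.id (X →₀ A ⧸ AddCommGroup.torsion A) := by
  apply AddMonoidHom.ext; intro g
  obtain ⟨f, rfl⟩ := qmap_surjective g
  simp only [AddMonoidHom.comp_apply, AddMonoidHom.id_apply]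
  rw [quotLift_qmap, quotLift_qmap]
  exact congrArg _ (DFunLike.congr_fun hαβ f)
end Aux

section Retract
variable (A : Type*) [AddCommGroup A] [AddGroup.FG A]

lemma exists_section :
    ∃ s : (A ⧸ AddCommGroup.torsion A) →+ A,
      ∀ q, QuotientAddGroup.mk' (AddCommGroup.torsion A) (s q) = q := by
  haveI : Module.Finite ℤ A := Module.Finite.iff_addGroup_fg.mpr ‹_›
  set T := AddCommGroup.torsion A
  set π : A →+ A ⧸ T := QuotientAddGroup.mk' T
  have hπ : Function.Surjective π := QuotientAddGroup.mk'_surjective T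
  haveI : Module.Finite ℤ (A ⧸ T) := Module.Finite.of_surjective π.toIntLinearMap hπ
  haveI : NoZeroSMulDivisors ℤ (A ⧸ T) := inferInstance
  haveI : Module.Free ℤ (A ⧸ T) := Module.free_of_finite_type_torsion_free'
  obtain ⟨h, hh⟩ := Module.projective_lifting_property π.toIntLinearMap LinearMap.id hπ
  exact ⟨h.toAddMonoidHom, fun q => DFunLike.congr_fun hh q⟩

lemma exists_torsion_retraction :
    ∃ ρ : A →+ A, (∀ a, ρ a ∈ AddCommGroup.torsion A) ∧
      ∀ t ∈ AddCommGroup.torsion A, ρ t = t := by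
  obtain ⟨s, hs⟩ := exists_section A
  refine ⟨AddMonoidHom.id A - s.comp (QuotientAddGroup.mk' (AddCommGroup.torsion A)),
    fun a => ?_, fun t ht => ?_⟩
  · rw [← QuotientAddGroup.eq_zero_iff]
    simp only [AddMonoidHom.sub_apply, AddMonoidHom.id_apply, AddMonoidHom.comp_apply]
    have h := hs ((QuotientAddGroup.mk' (AddCommGroup.torsion A)) a)
    simp only [QuotientAddGroup.mk'_apply] at h ⊢
    rw [QuotientAddGroup.mk_sub, h, sub_self]
  · simp only [AddMonoidHom.sub_apply, AddMonoidHom.id_apply, AddMonoidHom.comp_apply]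
    have h0 : QuotientAddGroup.mk' (AddCommGroup.torsion A) t = 0 :=
      (QuotientAddGroup.eq_zero_iff _).mpr ht
    rw [h0, map_zero, sub_zero]

lemma torsion_killed :
    ∃ n : ℕ, 0 < n ∧ ∀ t ∈ AddCommGroup.torsion A, n • t = 0 := by
  haveI : Module.Finite ℤ A := Module.Finite.iff_addGroup_fg.mpr ‹_›
  set T := AddCommGroup.torsion A
  haveI : IsNoetherian ℤ A := isNoetherian_of_isNoetherianRing_of_finite ℤ A
  have hfg : (AddSubgroup.toIntSubmodule T).FG := IsNoetherian.noetherian _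
  haveI : Module.Finite ℤ (AddSubgroup.toIntSubmodule T) := Module.Finite.iff_fg.mpr hfg
  haveI : AddGroup.FG (AddSubgroup.toIntSubmodule T) := Module.Finite.iff_addGroup_fg.mp ‹_›
  haveI : AddGroup.FG T := ‹AddGroup.FG (AddSubgroup.toIntSubmodule T)›
  have htor : AddMonoid.IsTorsion T := by
    rintro ⟨t, ht⟩
    obtain ⟨n, hn, hnt⟩ := isOfFinAddOrder_iff_nsmul_eq_zero.mp ht
    refine isOfFinAddOrder_iff_nsmul_eq_zero.mpr ⟨n, hn, ?_⟩
    ext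
    simpa using hnt
  haveI : Finite T := AddCommGroup.finite_of_fg_torsion T htor
  refine ⟨Nat.card T, Nat.card_pos, fun t ht => ?_⟩
  have h1 := card_nsmul_eq_zero' (x := (⟨t, ht⟩ : T))
  have h2 := Subtype.ext_iff.mp h1
  rw [AddSubmonoidClass.coe_nsmul] at h2
  simpa using h2

lemma exists_primary_retraction (p : ℕ) [hp : Fact p.Prime] :
    ∃ r : A →+ (AddCommGroup.primaryComponent A p),
      ∀ c, r ((AddCommGroup.primaryComponent A p).subtype c) = c := by
  obtain ⟨ρ, hρT, hρid⟩ := exists_torsion_retraction A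
  obtain ⟨n, hn, hkill⟩ := torsion_killed A
  set k := n.factorization p with hk
  set m := n / p ^ k with hm
  have hnm : p ^ k * m = n := Nat.ordProj_mul_ordCompl_eq_self n p
  have hpm : ¬ p ∣ m := Nat.not_dvd_ordCompl hp.out hn.ne'
  have hcopN : Nat.Coprime (p ^ k) m :=
    Nat.Coprime.pow_left k ((Nat.Prime.coprime_iff_not_dvd hp.out).mpr hpm)
  have hcop : IsCoprime ((p ^ k : ℕ) : ℤ) ((m : ℕ) : ℤ) := Nat.isCoprime_iff_coprime.mpr hcopN
  obtain ⟨u, v, huv⟩ := hcop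
  have hmem : ∀ a : A, ((v * (m : ℤ)) • ρ a) ∈ AddCommGroup.primaryComponent A p := by
    intro a
    rw [mem_primary_iff]
    refine ⟨k, ?_⟩
    have h1 : ((n : ℕ) : ℤ) • ρ a = 0 := by
      rw [natCast_zsmul]
      exact hkill _ (hρT a)
    calc p ^ k • ((v * (m : ℤ)) • ρ a)
        = ((p ^ k : ℕ) : ℤ) • ((v * (m : ℤ)) • ρ a) := by rw [natCast_zsmul]
      _ = (((p ^ k : ℕ) : ℤ) * (v * (m : ℤ))) • ρ a := smul_smul _ _ _
      _ = (v * ((n : ℕ) : ℤ)) • ρ a := by rw [← hnm]; push_cast; ring_nf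
      _ = v • (((n : ℕ) : ℤ) • ρ a) := (smul_smul _ _ _).symm
      _ = 0 := by rw [h1, smul_zero]
  have hadd : ∀ a b : A,
      (⟨(v * (m : ℤ)) • ρ (a + b), hmem _⟩ : AddCommGroup.primaryComponent A p) =
        ⟨(v * (m : ℤ)) • ρ a, hmem _⟩ + ⟨(v * (m : ℤ)) • ρ b, hmem _⟩ := by
    intro a b
    apply Subtype.ext
    simp [map_add, smul_add]
  refine ⟨AddMonoidHom.mk' (fun a => ⟨(v * (m : ℤ)) • ρ a, hmem a⟩) hadd, ?_⟩
  rintro ⟨t, htp⟩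
  apply Subtype.ext
  have htT : t ∈ AddCommGroup.torsion A := by
    obtain ⟨j, hj⟩ := (mem_primary_iff p t).mp htp
    exact (mem_torsion_iff' t).mpr ⟨p ^ j, pow_pos hp.out.pos j, hj⟩
  have hρt : ρ t = t := hρid t htT
  have hord : addOrderOf t ∣ p ^ k := by
    have h1 : addOrderOf t ∣ n := addOrderOf_dvd_of_nsmul_eq_zero (hkill t htT)
    obtain ⟨j, hj⟩ := AddCommGroup.mem_primaryComponent_iff_addOrderOf.mp htp
    rw [hj] at h1 ⊢
    rw [← hnm] at h1
    exact Nat.Coprime.dvd_of_dvd_mul_right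
      (Nat.Coprime.pow_left j ((Nat.Prime.coprime_iff_not_dvd hp.out).mpr hpm)) h1
  have hpk : ((p ^ k : ℕ) : ℤ) • t = 0 := by
    rw [natCast_zsmul]
    exact addOrderOf_dvd_iff_nsmul_eq_zero.mp hord
  show (v * (m : ℤ)) • ρ t = t
  rw [hρt]
  calc (v * (m : ℤ)) • t
      = (u * ((p ^ k : ℕ) : ℤ) + v * (m : ℤ)) • t - (u * ((p ^ k : ℕ) : ℤ)) • t := by
        rw [add_smul]; abel
    _ = t - u • (((p ^ k : ℕ) : ℤ) • t) := by rw [huv, one_smul, smul_smul]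
    _ = t := by rw [hpk, smul_zero, sub_zero]

end Retract



/-- Theorem B (c ↔ b): for `A` a finitely generated abelian group, `End_{ℤB}(⨁_X A)` is
directly finite iff for every `p ≥ 0` with `A_p ≠ 0` the ring `End_{ℤB}(A_p X)` is directly
finite, where `A_p` is the `p`-primary part for a prime `p` and `A_0 = A/tor(A)`. -/
theorem statement_7 (A : Type*) [AddCommGroup A] [AddGroup.FG A]
    (B : Type*) [Group B] (X : Type*) [MulAction B X] :
    EndDF B X A ↔
      ((∀ (p : ℕ) (hp : Fact p.Prime),
          @AddCommGroup.primaryComponent A _ p ≠ ⊥ →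
          EndDF B X (@AddCommGroup.primaryComponent A _ p)) ∧
        (Nontrivial (A ⧸ AddCommGroup.torsion A) →
          EndDF B X (A ⧸ AddCommGroup.torsion A))) := by
  classical
  constructor
  · intro h
    constructor
    · intro p hp _hne
      obtain ⟨r, hr⟩ := exists_primary_retraction A p
      exact EndDF.transfer ((AddCommGroup.primaryComponent A p).subtype) r hr h
    · intro _
      obtain ⟨s, hs⟩ := exists_section A
      exact EndDF.transfer s (QuotientAddGroup.mk' (AddCommGroup.torsion A)) hs h
  · rintro ⟨h1, h2⟩
    intro α β hα hβ hαβ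
    set γ : (X →₀ A) →+ (X →₀ A) := β.comp α with hγdef
    have hαβ' : ∀ f, α (β f) = f := fun f => DFunLike.congr_fun hαβ f
    have hidem : ∀ f, γ (γ f) = γ f := by
      intro f
      show β (α (β (α f))) = β (α f)
      rw [hαβ']
    -- γ fixes primary-valued finsupps
    have hprim : ∀ (p : ℕ) (hp : Fact p.Prime) (f : X →₀ A),
        (∀ x, f x ∈ @AddCommGroup.primaryComponent A _ p) → γ f = f := by
      intro p hp f hf
      by_cases hbot : @AddCommGroup.primaryComponent A _ p = ⊥
      · have hf0 : f = 0 := by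
          ext x
          have hx := hf x
          rw [hbot] at hx
          simpa using hx
        rw [hf0, map_zero]
      · have hsat := saturated_primary (X := X) (A := A) p
        have hcomp := restrictHom_comp hsat α β hαβ
        have hfix := h1 p hp hbot (restrictHom hsat α) (restrictHom hsat β)
          (restrictHom_comm hsat α hα) (restrictHom_comm hsat β hβ) hcomp
        have hγid : restrictHom hsat γ = AddMonoidHom.id _ := by
          apply AddMonoidHom.ext; intro g
          apply incl_injective
          rw [incl_restrictHom]
          have e1 : γ (Finsupp.mapRange.addMonoidHom
              (AddCommGroup.primaryComponent A p).subtype g)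
              = Finsupp.mapRange.addMonoidHom (AddCommGroup.primaryComponent A p).subtype
                  ((restrictHom hsat β).comp (restrictHom hsat α) g) := by
            rw [AddMonoidHom.comp_apply, AddMonoidHom.comp_apply, incl_restrictHom,
              incl_restrictHom]
          rw [e1, hfix]
        exact fix_of_restrict_fix hsat γ hγid f hf
    -- γ induces the identity on the quotient
    have hq : ∀ f : X →₀ A, qmap (X := X) (γ f) = qmap f := by
      intro f
      by_cases hNT : Nontrivial (A ⧸ AddCommGroup.torsion A)
      · have hcomp := quotLift_comp α β hαβ
        have hfix := h2 hNT (quotLift α) (quotLift β) (quotLift_comm α hα)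
          (quotLift_comm β hβ) hcomp
        have hfin := DFunLike.congr_fun hfix (qmap (X := X) f)
        rw [AddMonoidHom.comp_apply, AddMonoidHom.id_apply, quotLift_qmap, quotLift_qmap] at hfin
        exact hfin
      · haveI : Subsingleton (A ⧸ AddCommGroup.torsion A) :=
          not_nontrivial_iff_subsingleton.mp hNT
        haveI : Subsingleton (X →₀ (A ⧸ AddCommGroup.torsion A)) :=
          ⟨fun f g => by ext x; exact Subsingleton.elim _ _⟩
        exact Subsingleton.elim _ _
    -- γ fixes singletons with torsion value, by strong induction on the order
    have hsingle : ∀ (x : X) (nn : ℕ) (a : A), nn = addOrderOf a → 0 < nn →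
        γ (Finsupp.single x a) = Finsupp.single x a := by
      intro x nn
      induction nn using Nat.strong_induction_on with
      | _ nn ih =>
        intro a hord hpos
        by_cases hone : nn = 1
        · have h01 : addOrderOf a = 1 := by rw [← hord, hone]
          rw [AddMonoid.addOrderOf_eq_one_iff.mp h01]
          simp
        · set p := nn.minFac with hpdef
          have hpp : p.Prime := Nat.minFac_prime hone
          haveI hppf : Fact p.Prime := ⟨hpp⟩
          set k := nn.factorization p with hkdef
          set m := nn / p ^ k with hmdef
          have hnm : p ^ k * m = nn := Nat.ordProj_mul_ordCompl_eq_self nn p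
          have hpm : ¬ p ∣ m := Nat.not_dvd_ordCompl hpp hpos.ne'
          have hm0 : 0 < m := by
            rcases Nat.eq_zero_or_pos m with h | h
            · rw [h, mul_zero] at hnm
              omega
            · exact h
          have hk1 : 0 < k := by
            rw [hkdef]
            exact (Nat.Prime.factorization_pos_of_dvd hpp hpos.ne' (Nat.minFac_dvd nn))
          have hmlt : m < nn := by
            rw [← hnm]
            calc m = 1 * m := (one_mul m).symm
              _ < p ^ k * m :=
                  mul_lt_mul_of_pos_right (Nat.one_lt_pow hk1.ne' hpp.one_lt) hm0
          have hcop : IsCoprime ((p ^ k : ℕ) : ℤ) ((m : ℕ) : ℤ) :=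
            Nat.isCoprime_iff_coprime.mpr
              (Nat.Coprime.pow_left k ((Nat.Prime.coprime_iff_not_dvd hpp).mpr hpm))
          obtain ⟨u, v, huv⟩ := hcop
          have hna : ((nn : ℕ) : ℤ) • a = 0 := by
            rw [natCast_zsmul, hord]
            exact addOrderOf_nsmul_eq_zero a
          set a1 := (v * (m : ℤ)) • a with ha1
          set a2 := (u * ((p ^ k : ℕ) : ℤ)) • a with ha2
          have hsum : a = a1 + a2 := by
            rw [ha1, ha2, ← add_smul]
            have huv' : (v * (m : ℤ) + u * ((p ^ k : ℕ) : ℤ)) = 1 := by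
              push_cast at huv ⊢
              linarith
            rw [huv', one_smul]
          have ha1mem : a1 ∈ AddCommGroup.primaryComponent A p := by
            rw [mem_primary_iff]
            refine ⟨k, ?_⟩
            calc p ^ k • a1 = ((p ^ k : ℕ) : ℤ) • a1 := (natCast_zsmul _ _).symm
              _ = (((p ^ k : ℕ) : ℤ) * (v * (m : ℤ))) • a := smul_smul _ _ _
              _ = (v * ((nn : ℕ) : ℤ)) • a := by rw [← hnm]; push_cast; ring_nf
              _ = v • (((nn : ℕ) : ℤ) • a) := (smul_smul _ _ _).symm
              _ = 0 := by rw [hna, smul_zero]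
          have hma2 : m • a2 = 0 := by
            calc m • a2 = ((m : ℕ) : ℤ) • a2 := (natCast_zsmul _ _).symm
              _ = (((m : ℕ) : ℤ) * (u * ((p ^ k : ℕ) : ℤ))) • a := smul_smul _ _ _
              _ = (u * ((nn : ℕ) : ℤ)) • a := by rw [← hnm]; push_cast; ring_nf
              _ = u • (((nn : ℕ) : ℤ) • a) := (smul_smul _ _ _).symm
              _ = 0 := by rw [hna, smul_zero]
          have ha2ord : addOrderOf a2 ∣ m := addOrderOf_dvd_of_nsmul_eq_zero hma2
          have ha2fin : IsOfFinAddOrder a2 :=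
            isOfFinAddOrder_iff_nsmul_eq_zero.mpr ⟨m, hm0, hma2⟩
          have ha2pos : 0 < addOrderOf a2 := ha2fin.addOrderOf_pos
          have ha2lt : addOrderOf a2 < nn := lt_of_le_of_lt (Nat.le_of_dvd hm0 ha2ord) hmlt
          have ih2 := ih (addOrderOf a2) ha2lt a2 rfl ha2pos
          have hfix1 : γ (Finsupp.single x a1) = Finsupp.single x a1 := by
            apply hprim p hppf
            intro y
            rw [Finsupp.single_apply]
            by_cases hxy : x = y
            · rw [if_pos hxy]
              exact ha1mem
            · rw [if_neg hxy]
              exact zero_mem _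
          rw [hsum, Finsupp.single_add, map_add, hfix1, ih2]
    -- γ fixes torsion-valued finsupps
    have htorfix : ∀ f : X →₀ A, (∀ x, f x ∈ AddCommGroup.torsion A) → γ f = f := by
      intro f
      induction f using Finsupp.induction with
      | zero => intro _; exact map_zero γ
      | single_add x a g hxg ha0 ih =>
        intro hmem
        have hax : a ∈ AddCommGroup.torsion A := by
          have hx := hmem x
          rwa [Finsupp.add_apply, Finsupp.single_eq_same,
            Finsupp.notMem_support_iff.mp hxg, add_zero] at hx
        have hg : ∀ y, g y ∈ AddCommGroup.torsion A := by
          intro y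
          by_cases hyx : y = x
          · rw [hyx, Finsupp.notMem_support_iff.mp hxg]
            exact zero_mem _
          · have hy := hmem y
            rwa [Finsupp.add_apply, Finsupp.single_apply,
              if_neg (fun h => hyx h.symm), zero_add] at hy
        have hfin : IsOfFinAddOrder a := hax
        rw [map_add, ih hg, hsingle x (addOrderOf a) a rfl hfin.addOrderOf_pos]
    -- conclude
    apply AddMonoidHom.ext; intro f
    show γ f = f
    have hdiff : ∀ x, (γ f - f) x ∈ AddCommGroup.torsion A := by
      have h0 : qmap (X := X) (γ f - f) = 0 := by rw [map_sub, hq, sub_self]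
      exact (qmap_eq_zero_iff _).mp h0
    have h3 : γ (γ f - f) = γ f - f := htorfix _ hdiff
    rw [map_sub, hidem, sub_self] at h3
    have h4 := h3.symm
    rwa [sub_eq_zero] at h4
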